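/- Let M be a compact embedded submanifold of ℝⁿ with geodesic curvature bounded by κ_g, let D = (2-√2)/κ_g, and fix X ∈ M. If Y ∈ Exp_X(B(0_X, D)) (i.e., Y is connected to X by a geodesic of length at most D), then for every normal vector w ∈ N_X M one has ⟨w, Y - X⟩ ≤ κ_g ‖w‖ ‖Y - X‖². -/

import Mathlib

open Set
local notation "⟪" x ", " y "⟫_ℝ" => @inner ℝ _ _ x y

/-- normal vector inequality, local form: with geodesic
curvature bounded by `κ_g` and `D = (2-√2)/κ_g`, if `Y = Exp_X(η)` for a
tangent vector of length `d_M(X,Y) ≤ D` (i.e. `X` and `Y` are joined by a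
constant-speed geodesic of length at most `D`), then for every normal vector
`w ∈ N_X M` one has `⟪w, Y - X⟫ ≤ κ_g ‖w‖ ‖Y - X‖²`. -/
theorem normal_vector_inequality_local
    {n : ℕ} (M : Set (EuclideanSpace ℝ (Fin n))) (hM : IsCompact M)
    (κg : ℝ) (hκ : 0 < κg)
    (X Y : EuclideanSpace ℝ (Fin n)) (hX : X ∈ M) (hY : Y ∈ M)
    (dM : ℝ) (hdM : 0 ≤ dM) (hD : dM ≤ (2 - Real.sqrt 2) / κg)
    (γ γ' γ'' : ℝ → EuclideanSpace ℝ (Fin n))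
    (hγM : ∀ t ∈ Icc (0:ℝ) 1, γ t ∈ M)
    (hγ0 : γ 0 = X) (hγ1 : γ 1 = Y)
    (hder1 : ∀ t ∈ Icc (0:ℝ) 1, HasDerivAt γ (γ' t) t)
    (hder2 : ∀ t ∈ Icc (0:ℝ) 1, HasDerivAt γ' (γ'' t) t)
    (hspeed : ∀ t ∈ Icc (0:ℝ) 1, ‖γ' t‖ = dM)
    (hcurv : ∀ t ∈ Icc (0:ℝ) 1, ‖γ'' t‖ ≤ κg * ‖γ' t‖ ^ 2)
    (w : EuclideanSpace ℝ (Fin n)) (hw : ⟪w, γ' 0⟫_ℝ = 0) :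
    ⟪w, Y - X⟫_ℝ ≤ κg * ‖w‖ * ‖Y - X‖ ^ 2 := by
  set C : ℝ := κg * dM ^ 2 with hCdef
  have hC0 : 0 ≤ C := by positivity
  have h0mem : (0:ℝ) ∈ Icc (0:ℝ) 1 := by constructor <;> norm_num
  have h1mem : (1:ℝ) ∈ Icc (0:ℝ) 1 := by constructor <;> norm_num
  -- Lipschitz bound on γ'
  have key : ∀ t ∈ Icc (0:ℝ) 1, ‖γ' t - γ' 0‖ ≤ C * t := by
    intro t ht
    have := Convex.norm_image_sub_le_of_norm_hasDerivWithin_le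
      (f := γ') (f' := γ'') (s := Icc (0:ℝ) 1) (C := C)
      (fun x hx => (hder2 x hx).hasDerivWithinAt)
      (fun x hx => by rw [hCdef, ← hspeed x hx]; exact hcurv x hx)
      (convex_Icc 0 1) h0mem ht
    calc ‖γ' t - γ' 0‖ ≤ C * ‖t - 0‖ := this
      _ = C * t := by rw [sub_zero, Real.norm_eq_abs, abs_of_nonneg ht.1]
  have hγ'cont : ContinuousOn γ' (Icc (0:ℝ) 1) :=
    fun t ht => (hder2 t ht).continuousAt.continuousWithinAt
  have hint1 : IntervalIntegrable (fun t => γ' t - γ' 0) MeasureTheory.volume 0 1 :=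
    ((hγ'cont.sub continuousOn_const).mono (by rw [uIcc_of_le]; norm_num)).intervalIntegrable
  -- FTC for γ t - t • γ' 0
  have ftc1 : Y - X - γ' 0 = ∫ t in (0:ℝ)..1, (γ' t - γ' 0) := by
    have : (∫ t in (0:ℝ)..1, (γ' t - γ' 0))
        = (γ 1 - (1:ℝ) • γ' 0) - (γ 0 - (0:ℝ) • γ' 0) := by
      apply intervalIntegral.integral_eq_sub_of_hasDerivAt
        (f := fun t => γ t - t • γ' 0) (f' := fun t => γ' t - γ' 0)
      · intro t ht
        rw [uIcc_of_le (by norm_num)] at ht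
        exact (hder1 t ht).sub (by simpa using (hasDerivAt_id t).smul_const (γ' 0))
      · exact hint1
    rw [this, hγ0, hγ1]
    simp only [one_smul, zero_smul, sub_zero]
    abel
  have hCt_int : IntervalIntegrable (fun t => C * t) MeasureTheory.volume 0 1 :=
    (continuous_const.mul continuous_id).intervalIntegrable 0 1
  have hCtint : (∫ t in (0:ℝ)..1, C * t) = C / 2 := by
    rw [intervalIntegral.integral_const_mul, integral_id]
    norm_num
    ring
  -- chord lower bound
  have hchord : dM - C / 2 ≤ ‖Y - X‖ := by
    have h1 : ‖Y - X - γ' 0‖ ≤ C / 2 := by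
      rw [ftc1]
      have habs := intervalIntegral.norm_integral_le_abs_of_norm_le (μ := MeasureTheory.volume)
        (f := fun t => γ' t - γ' 0) (a := 0) (b := 1) (g := fun t => C * t) ?_ hCt_int
      · rw [hCtint] at habs
        calc ‖∫ t in (0:ℝ)..1, (γ' t - γ' 0)‖ ≤ |C / 2| := habs
          _ = C / 2 := abs_of_nonneg (by positivity)
      · rw [uIoc_of_le (by norm_num : (0:ℝ) ≤ 1)]
        apply MeasureTheory.ae_restrict_of_forall_mem measurableSet_Ioc
        intro t ht
        exact key t ⟨le_of_lt ht.1, ht.2⟩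
    have h2 : ‖γ' 0‖ - ‖Y - X - γ' 0‖ ≤ ‖Y - X‖ := by
      have := norm_sub_norm_le (γ' 0) (γ' 0 - (Y - X))
      simp only [sub_sub_cancel] at this
      calc ‖γ' 0‖ - ‖Y - X - γ' 0‖ = ‖γ' 0‖ - ‖γ' 0 - (Y - X)‖ := by rw [norm_sub_rev]
        _ ≤ ‖Y - X‖ := this
    have := hspeed 0 h0mem
    linarith
  -- inner product upper bound
  have hinner : ⟪w, Y - X⟫_ℝ ≤ ‖w‖ * C / 2 := by
    have ftc2 : ⟪w, Y - X⟫_ℝ = ∫ t in (0:ℝ)..1, ⟪w, γ' t⟫_ℝ := by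
      have : (∫ t in (0:ℝ)..1, ⟪w, γ' t⟫_ℝ) = ⟪w, γ 1⟫_ℝ - ⟪w, γ 0⟫_ℝ := by
        apply intervalIntegral.integral_eq_sub_of_hasDerivAt
          (f := fun t => ⟪w, γ t⟫_ℝ) (f' := fun t => ⟪w, γ' t⟫_ℝ)
        · intro t ht
          rw [uIcc_of_le (by norm_num)] at ht
          have := (hasDerivAt_const t w).inner ℝ (hder1 t ht)
          simpa using this
        · exact (Continuous.comp_continuousOn (continuous_const.inner continuous_id)
            (hγ'cont.mono (by rw [uIcc_of_le] <;> norm_num))).intervalIntegrable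
      rw [this, hγ0, hγ1, ← inner_sub_right]
    have hbound : ∀ t ∈ Icc (0:ℝ) 1, ⟪w, γ' t⟫_ℝ ≤ ‖w‖ * (C * t) := by
      intro t ht
      have : ⟪w, γ' t⟫_ℝ = ⟪w, γ' t - γ' 0⟫_ℝ := by rw [inner_sub_right, hw]; ring
      rw [this]
      calc ⟪w, γ' t - γ' 0⟫_ℝ ≤ ‖w‖ * ‖γ' t - γ' 0‖ := real_inner_le_norm _ _
        _ ≤ ‖w‖ * (C * t) := by
            exact mul_le_mul_of_nonneg_left (key t ht) (norm_nonneg w)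
    rw [ftc2]
    have hwint : IntervalIntegrable (fun t => ⟪w, γ' t⟫_ℝ) MeasureTheory.volume 0 1 :=
      (Continuous.comp_continuousOn (continuous_const.inner continuous_id)
        (hγ'cont.mono (by rw [uIcc_of_le] <;> norm_num))).intervalIntegrable
    have hwCt : IntervalIntegrable (fun t => ‖w‖ * (C * t)) MeasureTheory.volume 0 1 :=
      (continuous_const.mul (continuous_const.mul continuous_id)).intervalIntegrable 0 1
    calc (∫ t in (0:ℝ)..1, ⟪w, γ' t⟫_ℝ) ≤ ∫ t in (0:ℝ)..1, ‖w‖ * (C * t) := by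
          apply intervalIntegral.integral_mono_on (by norm_num) hwint hwCt
          intro t ht; exact hbound t ht
      _ = ‖w‖ * C / 2 := by
          simp only [← mul_assoc]
          rw [intervalIntegral.integral_const_mul, integral_id]
          norm_num
          ring
  -- put it together
  have hs2 : Real.sqrt 2 ^ 2 = 2 := Real.sq_sqrt (by norm_num)
  have hs0 : (0:ℝ) ≤ Real.sqrt 2 := Real.sqrt_nonneg 2
  have hκdM : κg * dM ≤ 2 - Real.sqrt 2 := by
    calc κg * dM = dM * κg := mul_comm _ _
      _ ≤ (2 - Real.sqrt 2) / κg * κg := by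
          exact mul_le_mul_of_nonneg_right hD (le_of_lt hκ)
      _ = 2 - Real.sqrt 2 := div_mul_cancel₀ _ (ne_of_gt hκ)
  have hsq : dM ^ 2 / 2 ≤ ‖Y - X‖ ^ 2 := by
    have hr0 : (0:ℝ) ≤ ‖Y - X‖ := norm_nonneg _
    have hlow : dM * (Real.sqrt 2 / 2) ≤ ‖Y - X‖ := by
      have : dM - C / 2 = dM * (1 - κg * dM / 2) := by rw [hCdef]; ring
      nlinarith [hchord]
    nlinarith [mul_nonneg hdM (div_nonneg hs0 (by norm_num : (0:ℝ) ≤ 2))]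
  calc ⟪w, Y - X⟫_ℝ ≤ ‖w‖ * C / 2 := hinner
    _ = κg * ‖w‖ * (dM ^ 2 / 2) := by rw [hCdef]; ring
    _ ≤ κg * ‖w‖ * ‖Y - X‖ ^ 2 := by
        exact mul_le_mul_of_nonneg_left hsq (by positivity)
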